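/- Let A ⊕ B be a closed densely defined operator in H ⊕ K such that for each 1 ≤ m ≤ k the powers A^m, B^m are closable and the closure of A^m ⊕ B^m is C-selfadjoint (all with respect to the same conjugation C on H ⊕ K). Let F be a linearly dense subspace of H with F ⊆ ⋃_{1≤m≤k} (ker Ā^m ∩ ker (A^{k+1−m})*), and assume ⋃_{1≤m≤k} (ker (B^m)* ∩ ker \overline{B^{k+1−m}}) = {0}. Then the subspaces H and K reduce C (C H = H, C K = K), and A and B are each complex selfadjoint. -/

import Mathlib

open InnerProductSpace in
/-- A conjugation on a complex inner ℂ product space: an antilinear involution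
satisfying `⟪Cf, Cg⟫ = ⟪g, f⟫`. -/
structure Conjugation (H : Type*) [NormedAddCommGroup H] [InnerProductSpace ℂ H] where
  toFun : H → H
  map_add' : ∀ x y, toFun (x + y) = toFun x + toFun y
  map_smul' : ∀ (c : ℂ) (x : H), toFun (c • x) = (starRingEnd ℂ c) • toFun x
  invol : ∀ x, toFun (toFun x) = x
  inner_map : ∀ x y, (inner ℂ (toFun x) (toFun y) : ℂ) = inner ℂ y x

/-- `T` is `C`-symmetric: `T ⊆ C T* C`. -/
noncomputable def CSymmetric {H : Type*} [NormedAddCommGroup H] [InnerProductSpace ℂ H]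
    [CompleteSpace H] (C : Conjugation H) (T : H →ₗ.[ℂ] H) : Prop :=
  ∀ x : T.domain, ∃ hx : C.toFun x ∈ T.adjoint.domain,
    C.toFun (T.adjoint ⟨C.toFun x, hx⟩) = T x

/-- `T` is `C`-selfadjoint: `T = C T* C`. -/
noncomputable def CSelfAdjoint {H : Type*} [NormedAddCommGroup H] [InnerProductSpace ℂ H]
    [CompleteSpace H] (C : Conjugation H) (T : H →ₗ.[ℂ] H) : Prop :=
  CSymmetric C T ∧ ∀ y : H, C.toFun y ∈ T.adjoint.domain → y ∈ T.domain

/-- Composition of partially defined linear maps, with its natural (maximal) domain. -/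
noncomputable def LinearPMap.pcomp {R E F G : Type*} [Ring R] [AddCommGroup E] [Module R E]
    [AddCommGroup F] [Module R F] [AddCommGroup G] [Module R G]
    (g : F →ₗ.[R] G) (f : E →ₗ.[R] F) : E →ₗ.[R] G :=
  g.comp (f.domRestrict ((g.domain.comap f.toFun).map f.domain.subtype))
    (by
      rintro ⟨x, hx1, hx2⟩
      obtain ⟨y, hy, hyx⟩ := hx1
      erw [LinearPMap.domRestrict_apply (y := y) (by exact hyx.symm)]
      exact hy)

/-- Natural powers of a partially defined linear map, `T^(n+1) = T ∘ T^n`, with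
`T^0` the identity on the whole space. -/
noncomputable def LinearPMap.ppow {R E : Type*} [Ring R] [AddCommGroup E] [Module R E]
    (T : E →ₗ.[R] E) : ℕ → E →ₗ.[R] E
  | 0 => ⟨⊤, (⊤ : Submodule R E).subtype⟩
  | n + 1 => T.pcomp (T.ppow n)

/-- The kernel of a partially defined linear map, as a set. -/
def pker {R E F : Type*} [Ring R] [AddCommGroup E] [Module R E] [AddCommGroup F] [Module R F]
    (f : E →ₗ.[R] F) : Set E :=
  {x : E | ∃ hx : x ∈ f.domain, f ⟨x, hx⟩ = 0}


namespace Conjugation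

variable {H : Type*} [NormedAddCommGroup H] [InnerProductSpace ℂ H] (C : Conjugation H)

theorem map_zero' : C.toFun 0 = 0 := by
  simpa using C.map_smul' 0 0

theorem map_neg' (x : H) : C.toFun (-x) = -C.toFun x := by
  simpa using C.map_smul' (-1) x

theorem map_sub' (x y : H) : C.toFun (x - y) = C.toFun x - C.toFun y := by
  rw [sub_eq_add_neg, C.map_add', C.map_neg', sub_eq_add_neg]

theorem norm_map (x : H) : ‖C.toFun x‖ = ‖x‖ := by
  have h := C.inner_map x x
  rw [inner_self_eq_norm_sq_to_K, inner_self_eq_norm_sq_to_K] at h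
  have h2 : ‖C.toFun x‖ ^ 2 = ‖x‖ ^ 2 := by exact_mod_cast h
  calc ‖C.toFun x‖ = Real.sqrt (‖C.toFun x‖ ^ 2) := (Real.sqrt_sq (norm_nonneg _)).symm
    _ = Real.sqrt (‖x‖ ^ 2) := by rw [h2]
    _ = ‖x‖ := Real.sqrt_sq (norm_nonneg _)

theorem isometry : Isometry C.toFun := by
  refine Isometry.of_dist_eq fun x y => ?_
  rw [dist_eq_norm, dist_eq_norm, ← C.map_sub', C.norm_map]

theorem continuous : Continuous C.toFun := C.isometry.continuous

end Conjugation

theorem CSelfAdjoint.dense_domain {H : Type*} [NormedAddCommGroup H] [InnerProductSpace ℂ H]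
    [CompleteSpace H] {C : Conjugation H} {T : H →ₗ.[ℂ] H} (h : CSelfAdjoint C T) :
    Dense (T.domain : Set H) := by
  by_contra hnd
  have hz : ∀ x : T.domain, T x = 0 := by
    intro x
    obtain ⟨hx, hc⟩ := h.1 x
    rw [LinearPMap.adjoint_apply_of_not_dense hnd, C.map_zero'] at hc
    exact hc.symm
  have htop : ∀ y : H, y ∈ T.domain := by
    intro y
    apply h.2
    rw [LinearPMap.mem_adjoint_domain_iff]
    have hfun : ((innerₛₗ ℂ (C.toFun y)).comp T.toFun) = 0 := by
      ext x
      simp [hz x]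
    rw [hfun]
    exact continuous_zero
  exact hnd (by rw [Set.eq_univ_of_forall htop]; exact dense_univ)

theorem dense_of_closure_dense {E : Type*} [NormedAddCommGroup E] [InnerProductSpace ℂ E]
    {T : E →ₗ.[ℂ] E} (hT : T.IsClosable) (h : Dense (T.closure.domain : Set E)) :
    Dense (T.domain : Set E) := by
  have hsub : (T.closure.domain : Set E) ⊆ closure (T.domain : Set E) := by
    intro y hy
    have hg : ((y : E), T.closure ⟨y, hy⟩) ∈ T.closure.graph := T.closure.mem_graph ⟨y, hy⟩
    rw [← hT.graph_closure_eq_closure_graph] at hg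
    have hg' : ((y, T.closure ⟨y, hy⟩) : E × E) ∈ closure (T.graph : Set (E × E)) := by
      rwa [← Submodule.topologicalClosure_coe]
    have hmaps : Set.MapsTo (Prod.fst : E × E → E) (T.graph : Set (E × E))
        (T.domain : Set E) := by
      rintro ⟨a, b⟩ hab
      obtain ⟨z, hz1, -⟩ := T.mem_graph_iff.mp hab
      exact hz1 ▸ z.2
    simpa using map_mem_closure continuous_fst hg' hmaps
  rw [← dense_closure]
  exact h.mono hsub

theorem closure_eq_self_of_isClosed {E : Type*} [NormedAddCommGroup E] [InnerProductSpace ℂ E]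
    {T : E →ₗ.[ℂ] E} (h : T.IsClosed) : T.closure = T := by
  apply LinearPMap.eq_of_eq_graph
  rw [← h.isClosable.graph_closure_eq_closure_graph]
  exact IsClosed.submodule_topologicalClosure_eq h

theorem ppow_one_eq {R E : Type*} [Ring R] [AddCommGroup E] [Module R E] (A : E →ₗ.[R] E) :
    A.ppow 1 = A := by
  apply LinearPMap.ext
  · ext x
    simp [LinearPMap.ppow, LinearPMap.pcomp, LinearPMap.comp, LinearMap.compPMap,
      LinearPMap.codRestrict, LinearPMap.domRestrict]
    exact ⟨fun ⟨y, hy, hyx⟩ => hyx ▸ hy, fun h => ⟨⟨x, trivial⟩, h, rfl⟩⟩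
  · intro x y hxy
    simp only [LinearPMap.ppow, LinearPMap.pcomp, LinearPMap.comp, LinearMap.compPMap,
      LinearPMap.codRestrict, LinearPMap.domRestrict]
    show A.toFun _ = A.toFun ⟨x, hxy⟩
    congr 1

theorem pker_closure_iff_graph {E F : Type*} [NormedAddCommGroup E] [InnerProductSpace ℂ E]
    [NormedAddCommGroup F] [InnerProductSpace ℂ F]
    {f : E →ₗ.[ℂ] F} (hf : f.IsClosable) (x : E) :
    x ∈ pker f.closure ↔ (x, (0 : F)) ∈ closure (f.graph : Set (E × F)) := by
  constructor
  · rintro ⟨hx, hv⟩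
    have hg := f.closure.mem_graph ⟨x, hx⟩
    rw [hv, ← hf.graph_closure_eq_closure_graph, ← SetLike.mem_coe,
      Submodule.topologicalClosure_coe] at hg
    exact hg
  · intro h
    have h' : ((x, 0) : E × F) ∈ f.closure.graph := by
      rw [← hf.graph_closure_eq_closure_graph, ← SetLike.mem_coe,
        Submodule.topologicalClosure_coe]
      exact h
    obtain ⟨z, hz1, hz2⟩ := f.closure.mem_graph_iff.mp h'
    have hxd : x ∈ f.closure.domain := by rw [show x = (↑z : E) from hz1.symm]; exact z.2
    refine ⟨hxd, ?_⟩
    rw [show (⟨x, hxd⟩ : f.closure.domain) = z from Subtype.ext (by exact hz1.symm)]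
    exact hz2
theorem test_part1 {H K : Type*} [NormedAddCommGroup H] [InnerProductSpace ℂ H] [CompleteSpace H]
    [NormedAddCommGroup K] [InnerProductSpace ℂ K] [CompleteSpace K]
    (k : ℕ)
    (A : H →ₗ.[ℂ] H) (B : K →ₗ.[ℂ] K)
    (C : Conjugation (WithLp 2 (H × K)))
    (S : ℕ → (WithLp 2 (H × K) →ₗ.[ℂ] WithLp 2 (H × K)))
    (hSdom : ∀ m, ∀ f : WithLp 2 (H × K), f ∈ (S m).domain ↔
      (WithLp.equiv 2 (H × K) f).1 ∈ (A.ppow m).domain ∧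
      (WithLp.equiv 2 (H × K) f).2 ∈ (B.ppow m).domain)
    (hclosable : ∀ m, 1 ≤ m → m ≤ k →
      (A.ppow m).IsClosable ∧ (B.ppow m).IsClosable ∧ (S m).IsClosable)
    (hsa : ∀ m, 1 ≤ m → m ≤ k → CSelfAdjoint C ((S m).closure)) :
    ∀ m, 1 ≤ m → m ≤ k →
      Dense ((A.ppow m).domain : Set H) ∧ Dense ((B.ppow m).domain : Set K) := by
  have hcfst : Continuous (fun z : WithLp 2 (H × K) => (WithLp.equiv 2 (H × K) z).1) :=
    continuous_fst.comp (WithLp.prodContinuousLinearEquiv 2 ℂ H K).continuous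
  have hcsnd : Continuous (fun z : WithLp 2 (H × K) => (WithLp.equiv 2 (H × K) z).2) :=
    continuous_snd.comp (WithLp.prodContinuousLinearEquiv 2 ℂ H K).continuous
  intro m h1 h2
  have hdc : Dense (((S m).closure.domain : Set (WithLp 2 (H × K)))) :=
    (hsa m h1 h2).dense_domain
  have hdS : Dense (((S m).domain : Set (WithLp 2 (H × K)))) :=
    dense_of_closure_dense (hclosable m h1 h2).2.2 hdc
  constructor
  · intro x
    have hx : ((WithLp.equiv 2 (H × K)).symm (x, 0)) ∈
        closure (((S m).domain : Set (WithLp 2 (H × K)))) := hdS _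
    have hmaps : Set.MapsTo (fun z : WithLp 2 (H × K) => (WithLp.equiv 2 (H × K) z).1)
        ((S m).domain : Set (WithLp 2 (H × K))) ((A.ppow m).domain : Set H) :=
      fun z hz => ((hSdom m z).1 hz).1
    have := map_mem_closure hcfst hx hmaps
    simpa using this
  · intro y
    have hy : ((WithLp.equiv 2 (H × K)).symm (0, y)) ∈
        closure (((S m).domain : Set (WithLp 2 (H × K)))) := hdS _
    have hmaps : Set.MapsTo (fun z : WithLp 2 (H × K) => (WithLp.equiv 2 (H × K) z).2)
        ((S m).domain : Set (WithLp 2 (H × K))) ((B.ppow m).domain : Set K) :=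
      fun z hz => ((hSdom m z).1 hz).2
    have := map_mem_closure hcsnd hy hmaps
    simpa using this

theorem test_key {H K : Type*} [NormedAddCommGroup H] [InnerProductSpace ℂ H] [CompleteSpace H]
    [NormedAddCommGroup K] [InnerProductSpace ℂ K] [CompleteSpace K]
    (k : ℕ) (hk : 1 ≤ k)
    (A : H →ₗ.[ℂ] H) (B : K →ₗ.[ℂ] K)
    (C : Conjugation (WithLp 2 (H × K)))
    (S : ℕ → (WithLp 2 (H × K) →ₗ.[ℂ] WithLp 2 (H × K)))
    (hSdom : ∀ m, ∀ f : WithLp 2 (H × K), f ∈ (S m).domain ↔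
      (WithLp.equiv 2 (H × K) f).1 ∈ (A.ppow m).domain ∧
      (WithLp.equiv 2 (H × K) f).2 ∈ (B.ppow m).domain)
    (hSact : ∀ m, ∀ (f : (S m).domain)
      (ha : (WithLp.equiv 2 (H × K) (f : WithLp 2 (H × K))).1 ∈ (A.ppow m).domain)
      (hb : (WithLp.equiv 2 (H × K) (f : WithLp 2 (H × K))).2 ∈ (B.ppow m).domain),
      WithLp.equiv 2 (H × K) ((S m) f) = ((A.ppow m) ⟨_, ha⟩, (B.ppow m) ⟨_, hb⟩))
    (hclosable : ∀ m, 1 ≤ m → m ≤ k →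
      (A.ppow m).IsClosable ∧ (B.ppow m).IsClosable ∧ (S m).IsClosable)
    (hsa : ∀ m, 1 ≤ m → m ≤ k → CSelfAdjoint C ((S m).closure))
    (heA : ∀ m, 1 ≤ m → m ≤ k →
      Dense ((A.ppow m).domain : Set H) ∧ Dense ((B.ppow m).domain : Set K))
    (F : Submodule ℂ H)
    (hF : ∀ x ∈ F, ∃ m, 1 ≤ m ∧ m ≤ k ∧
      x ∈ pker (A.ppow m).closure ∩ pker ((A.ppow (k + 1 - m)).adjoint))
    (hB : ∀ y : K, (∃ m, 1 ≤ m ∧ m ≤ k ∧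
      y ∈ pker ((B.ppow m).adjoint) ∩ pker (B.ppow (k + 1 - m)).closure) → y = 0) :
    ∀ x ∈ F, (WithLp.equiv 2 (H × K)
      (C.toFun ((WithLp.equiv 2 (H × K)).symm (x, 0)))).2 = 0 := by
  have hcmk : Continuous (fun p : H × K => (WithLp.equiv 2 (H × K)).symm p) :=
    (WithLp.prodContinuousLinearEquiv 2 ℂ H K).symm.continuous
  intro x hx
  obtain ⟨m, h1, h2, hker1, hker2⟩ := hF x hx
  obtain ⟨hxd2, hxv2⟩ := hker2
  set n := k + 1 - m with hn
  have h1n : 1 ≤ n := by omega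
  have h2n : n ≤ k := by omega
  -- Step A: (x,0) ∈ pker (S m).closure
  have hA0 : (WithLp.equiv 2 (H × K)).symm (x, 0) ∈ pker (S m).closure := by
    rw [pker_closure_iff_graph (hclosable m h1 h2).2.2]
    have hgx : ((x : H), (0 : H)) ∈ closure ((A.ppow m).graph : Set (H × H)) :=
      (pker_closure_iff_graph (hclosable m h1 h2).1 x).mp hker1
    have hθc : Continuous (fun p : H × H =>
        (((WithLp.equiv 2 (H × K)).symm (p.1, 0), (WithLp.equiv 2 (H × K)).symm (p.2, 0)) :
          WithLp 2 (H × K) × WithLp 2 (H × K))) :=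
      (hcmk.comp (continuous_fst.prodMk continuous_const)).prodMk
        (hcmk.comp (continuous_snd.prodMk continuous_const))
    have hmaps : Set.MapsTo (fun p : H × H =>
        (((WithLp.equiv 2 (H × K)).symm (p.1, 0), (WithLp.equiv 2 (H × K)).symm (p.2, 0)) :
          WithLp 2 (H × K) × WithLp 2 (H × K)))
        ((A.ppow m).graph : Set (H × H)) ((S m).graph : Set _) := by
      rintro ⟨a, c⟩ hac
      obtain ⟨z, hz1, hz2⟩ := (A.ppow m).mem_graph_iff.mp hac
      simp only at hz1 hz2
      have hmem : (WithLp.equiv 2 (H × K)).symm (a, 0) ∈ (S m).domain := by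
        rw [hSdom]
        constructor
        · simpa using hz1 ▸ z.2
        · simpa using Submodule.zero_mem (B.ppow m).domain
      have ha : (WithLp.equiv 2 (H × K) ((WithLp.equiv 2 (H × K)).symm (a, (0 : K)))).1 ∈
          (A.ppow m).domain := by simpa using hz1 ▸ z.2
      have hb : (WithLp.equiv 2 (H × K) ((WithLp.equiv 2 (H × K)).symm (a, (0 : K)))).2 ∈
          (B.ppow m).domain := by simpa using Submodule.zero_mem (B.ppow m).domain
      rw [SetLike.mem_coe, (S m).mem_graph_iff]
      refine ⟨⟨_, hmem⟩, rfl, ?_⟩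
      have h2' : S m ⟨_, hmem⟩ = (WithLp.equiv 2 (H × K)).symm
          (A.ppow m ⟨_, ha⟩, B.ppow m ⟨_, hb⟩) :=
        (Equiv.eq_symm_apply _).mpr (hSact m ⟨_, hmem⟩ ha hb)
      rw [h2']
      apply congrArg (WithLp.equiv 2 (H × K)).symm
      refine Prod.ext ?_ ?_
      · show A.ppow m ⟨_, ha⟩ = c
        rw [show (⟨_, ha⟩ : (A.ppow m).domain) = z from Subtype.ext (by simp [hz1])]
        exact hz2
      · show B.ppow m ⟨_, hb⟩ = 0
        rw [show (⟨_, hb⟩ : (B.ppow m).domain) = 0 from Subtype.ext (by simp)]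
        exact (B.ppow m).map_zero
    have h00 : (WithLp.equiv 2 (H × K)).symm ((0 : H), (0 : K)) = 0 := by
      rfl
    have h' := map_mem_closure hθc hgx hmaps
    simp only [h00] at h'
    exact h'
  obtain ⟨hxdSm, hxvSm⟩ := hA0
  -- Step B
  obtain ⟨hCx, hCxv⟩ := (hsa m h1 h2).1 ⟨_, hxdSm⟩
  have hadj0 : (S m).closure.adjoint
      ⟨C.toFun ((WithLp.equiv 2 (H × K)).symm (x, 0)), hCx⟩ = 0 := by
    have h' := congrArg C.toFun hCxv
    rwa [C.invol, hxvSm, C.map_zero'] at h'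
  have hperp : ∀ w : (S m).closure.domain,
      (inner ℂ (C.toFun ((WithLp.equiv 2 (H × K)).symm (x, 0))) ((S m).closure w) : ℂ) = 0 := by
    intro w
    have hfa := LinearPMap.adjoint_isFormalAdjoint (hsa m h1 h2).dense_domain
      ⟨C.toFun ((WithLp.equiv 2 (H × K)).symm (x, 0)), hCx⟩ w
    rw [hadj0] at hfa
    simpa using hfa.symm
  -- Step C: v ∈ pker (B.ppow m)†
  set v := (WithLp.equiv 2 (H × K)
    (C.toFun ((WithLp.equiv 2 (H × K)).symm (x, 0)))).2 with hvdef
  have hinnerB : ∀ b : (B.ppow m).domain, (inner ℂ v ((B.ppow m) b) : ℂ) = 0 := by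
    intro b
    have hmem : (WithLp.equiv 2 (H × K)).symm (0, (b : K)) ∈ (S m).domain := by
      rw [hSdom]
      constructor
      · simpa using Submodule.zero_mem (A.ppow m).domain
      · simpa using b.2
    have ha : (WithLp.equiv 2 (H × K) ((WithLp.equiv 2 (H × K)).symm ((0 : H), (b : K)))).1 ∈
        (A.ppow m).domain := by simpa using Submodule.zero_mem (A.ppow m).domain
    have hb : (WithLp.equiv 2 (H × K) ((WithLp.equiv 2 (H × K)).symm ((0 : H), (b : K)))).2 ∈
        (B.ppow m).domain := by simpa using b.2
    have hmem' : (WithLp.equiv 2 (H × K)).symm (0, (b : K)) ∈ (S m).closure.domain :=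
      (S m).le_closure.1 hmem
    have hval : (S m).closure ⟨_, hmem'⟩ =
        (WithLp.equiv 2 (H × K)).symm (0, (B.ppow m) b) := by
      rw [← (S m).le_closure.2 (x := ⟨_, hmem⟩) (y := ⟨_, hmem'⟩) rfl]
      have h2' : S m ⟨_, hmem⟩ = (WithLp.equiv 2 (H × K)).symm
          (A.ppow m ⟨_, ha⟩, B.ppow m ⟨_, hb⟩) :=
        (Equiv.eq_symm_apply _).mpr (hSact m ⟨_, hmem⟩ ha hb)
      rw [h2']
      apply congrArg (WithLp.equiv 2 (H × K)).symm
      refine Prod.ext ?_ rfl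
      show A.ppow m ⟨_, ha⟩ = 0
      rw [show (⟨_, ha⟩ : (A.ppow m).domain) = 0 from Subtype.ext (by simp)]
      exact (A.ppow m).map_zero
    have hp := hperp ⟨_, hmem'⟩
    rw [hval] at hp
    rw [WithLp.prod_inner_apply] at hp
    simp [WithLp.equiv_symm_apply, WithLp.ofLp_toLp, WithLp.toLp_fst, WithLp.toLp_snd] at hp
    exact hp
  have hmemv : v ∈ (B.ppow m).adjoint.domain :=
    LinearPMap.mem_adjoint_domain_of_exists _
      ⟨0, fun b => by simp [(hinnerB b).symm]⟩
  have hkerB1 : v ∈ pker (B.ppow m).adjoint :=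
    ⟨hmemv, LinearPMap.adjoint_apply_eq (heA m h1 h2).2 ⟨v, hmemv⟩
      (fun b => by simp [(hinnerB b).symm])⟩
  -- Step D: (x,0) ∈ pker ((S n).closure)†
  have hxAn : ∀ a : (A.ppow n).domain, (inner ℂ x ((A.ppow n) a) : ℂ) = 0 := by
    intro a
    have hfa := LinearPMap.adjoint_isFormalAdjoint (heA n h1n h2n).1 ⟨x, hxd2⟩ a
    rw [hxv2] at hfa
    simpa using hfa.symm
  have hSnperp : ∀ w : (S n).closure.domain,
      (inner ℂ ((WithLp.equiv 2 (H × K)).symm (x, 0)) ((S n).closure w) : ℂ) = 0 := by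
    intro w
    have hclosedset : IsClosed {p : (WithLp 2 (H × K)) × (WithLp 2 (H × K)) |
        (inner ℂ ((WithLp.equiv 2 (H × K)).symm (x, 0)) p.2 : ℂ) = 0} :=
      isClosed_eq (Continuous.inner continuous_const continuous_snd) continuous_const
    have hsubset : ((S n).graph : Set _) ⊆ {p : (WithLp 2 (H × K)) × (WithLp 2 (H × K)) |
        (inner ℂ ((WithLp.equiv 2 (H × K)).symm (x, 0)) p.2 : ℂ) = 0} := by
      rintro ⟨f, g⟩ hfg
      obtain ⟨z, hz1, hz2⟩ := (S n).mem_graph_iff.mp hfg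
      simp only at hz1 hz2
      have ha := ((hSdom n z).1 z.2).1
      have hb := ((hSdom n z).1 z.2).2
      have hval := hSact n z ha hb
      simp only [Set.mem_setOf_eq]
      rw [← hz2]
      have hg' : ((S n) z : WithLp 2 (H × K)) = (WithLp.equiv 2 (H × K)).symm
          (A.ppow n ⟨_, ha⟩, B.ppow n ⟨_, hb⟩) := (Equiv.eq_symm_apply _).mpr hval
      rw [hg', WithLp.prod_inner_apply]
      simp only [WithLp.equiv_symm_apply, WithLp.ofLp_toLp, WithLp.toLp_fst, WithLp.toLp_snd]
      rw [hxAn ⟨_, ha⟩]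
      simp
    have hcl : (((w : WithLp 2 (H × K)), (S n).closure w) :
        (WithLp 2 (H × K)) × (WithLp 2 (H × K))) ∈ closure ((S n).graph : Set _) := by
      have hg := (S n).closure.mem_graph w
      rwa [← (hclosable n h1n h2n).2.2.graph_closure_eq_closure_graph, ← SetLike.mem_coe,
        Submodule.topologicalClosure_coe] at hg
    exact closure_minimal hsubset hclosedset hcl
  have hxdn : (WithLp.equiv 2 (H × K)).symm (x, 0) ∈ (S n).closure.adjoint.domain :=
    LinearPMap.mem_adjoint_domain_of_exists _
      ⟨0, fun w => by simp only [inner_zero_left]; exact (hSnperp w).symm⟩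
  have hxvn : (S n).closure.adjoint ⟨_, hxdn⟩ = 0 :=
    LinearPMap.adjoint_apply_eq (hsa n h1n h2n).dense_domain _
      (fun w => by simp only [inner_zero_left]; exact (hSnperp w).symm)
  -- Step E
  have hy0 : C.toFun ((WithLp.equiv 2 (H × K)).symm (x, 0)) ∈ (S n).closure.domain := by
    apply (hsa n h1n h2n).2
    rw [C.invol]
    exact hxdn
  obtain ⟨hc2, hc2v⟩ := (hsa n h1n h2n).1 ⟨_, hy0⟩
  have harg : (⟨C.toFun (C.toFun ((WithLp.equiv 2 (H × K)).symm (x, 0))), hc2⟩ :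
      (S n).closure.adjoint.domain) = ⟨_, hxdn⟩ := Subtype.ext (C.invol _)
  rw [harg, hxvn, C.map_zero'] at hc2v
  -- Step F: v ∈ pker (B.ppow n).closure
  have hgr : ((C.toFun ((WithLp.equiv 2 (H × K)).symm (x, 0)), (0 : WithLp 2 (H × K))) :
      (WithLp 2 (H × K)) × (WithLp 2 (H × K))) ∈
      closure ((S n).graph : Set _) := by
    have hg := (S n).closure.mem_graph ⟨_, hy0⟩
    rw [← hc2v] at hg
    rwa [← (hclosable n h1n h2n).2.2.graph_closure_eq_closure_graph, ← SetLike.mem_coe,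
      Submodule.topologicalClosure_coe] at hg
  have hcsnd : Continuous (fun z : WithLp 2 (H × K) => (WithLp.equiv 2 (H × K) z).2) :=
    continuous_snd.comp (WithLp.prodContinuousLinearEquiv 2 ℂ H K).continuous
  have hρc : Continuous (fun p : (WithLp 2 (H × K)) × (WithLp 2 (H × K)) =>
      (((WithLp.equiv 2 (H × K) p.1).2, (WithLp.equiv 2 (H × K) p.2).2) : K × K)) :=
    (hcsnd.comp continuous_fst).prodMk (hcsnd.comp continuous_snd)
  have hρmaps : Set.MapsTo (fun p : (WithLp 2 (H × K)) × (WithLp 2 (H × K)) =>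
      (((WithLp.equiv 2 (H × K) p.1).2, (WithLp.equiv 2 (H × K) p.2).2) : K × K))
      ((S n).graph : Set _) ((B.ppow n).graph : Set (K × K)) := by
    rintro ⟨f, g⟩ hfg
    obtain ⟨z, hz1, hz2⟩ := (S n).mem_graph_iff.mp hfg
    simp only at hz1 hz2
    have ha := ((hSdom n z).1 z.2).1
    have hb := ((hSdom n z).1 z.2).2
    have hval := hSact n z ha hb
    show ((((WithLp.equiv 2 (H × K)) f).2, ((WithLp.equiv 2 (H × K)) g).2) : K × K) ∈
      ((B.ppow n).graph : Set (K × K))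
    rw [SetLike.mem_coe, (B.ppow n).mem_graph_iff]
    refine ⟨⟨_, hb⟩, ?_, ?_⟩
    · show ((WithLp.equiv 2 (H × K)) (z : WithLp 2 (H × K))).2 = ((WithLp.equiv 2 (H × K)) f).2
      rw [hz1]
    · show (B.ppow n) ⟨_, hb⟩ = ((WithLp.equiv 2 (H × K)) g).2
      rw [← hz2, hval]
  have hvmem := map_mem_closure hρc hgr hρmaps
  simp only at hvmem
  have hgrB : ((v, (0 : K)) : K × K) ∈ closure ((B.ppow n).graph : Set (K × K)) := by
    have h0 : ((WithLp.equiv 2 (H × K)) (0 : WithLp 2 (H × K))).2 = 0 := by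
      rfl
    rwa [h0] at hvmem
  have hkerB2 : v ∈ pker (B.ppow n).closure :=
    (pker_closure_iff_graph (hclosable n h1n h2n).2.1 v).mpr hgrB
  exact hB v ⟨m, h1, h2, hkerB1, by rw [← hn]; exact hkerB2⟩

/-- Let `T = A ⊕ B` be a closed densely defined operator in `H ⊕ K` such
that for `1 ≤ m ≤ k` the powers `A^m`, `B^m` are closable and the closure of
`A^m ⊕ B^m` (here the operator `S m`) is `C`-selfadjoint. If `F` is a linearly dense
subspace of `H` with `F ⊆ ⋃_{1≤m≤k} (ker Ā^m ∩ ker (A^{k+1-m})*)`, and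
`⋃_{1≤m≤k} (ker (B^m)* ∩ ker B̄^{k+1-m}) = {0}`, then `H` and `K` reduce `C` and
`A`, `B` are complex selfadjoint. -/
theorem stmt_18 {H K : Type*} [NormedAddCommGroup H] [InnerProductSpace ℂ H] [CompleteSpace H]
    [NormedAddCommGroup K] [InnerProductSpace ℂ K] [CompleteSpace K]
    (k : ℕ) (hk : 1 ≤ k)
    (A : H →ₗ.[ℂ] H) (B : K →ₗ.[ℂ] K)
    (hdA : Dense (A.domain : Set H)) (hdB : Dense (B.domain : Set K))
    (C : Conjugation (WithLp 2 (H × K)))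
    -- `T` is the direct sum `A ⊕ B`
    (T : WithLp 2 (H × K) →ₗ.[ℂ] WithLp 2 (H × K))
    (hTdom : ∀ f : WithLp 2 (H × K), f ∈ T.domain ↔
      (WithLp.equiv 2 (H × K) f).1 ∈ A.domain ∧ (WithLp.equiv 2 (H × K) f).2 ∈ B.domain)
    (hTact : ∀ (f : T.domain) (ha : (WithLp.equiv 2 (H × K) (f : WithLp 2 (H × K))).1 ∈ A.domain)
      (hb : (WithLp.equiv 2 (H × K) (f : WithLp 2 (H × K))).2 ∈ B.domain),
      WithLp.equiv 2 (H × K) (T f) = (A ⟨_, ha⟩, B ⟨_, hb⟩))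
    (hTclosed : T.IsClosed)
    -- `S m` is the direct sum `A^m ⊕ B^m`
    (S : ℕ → (WithLp 2 (H × K) →ₗ.[ℂ] WithLp 2 (H × K)))
    (hSdom : ∀ m, ∀ f : WithLp 2 (H × K), f ∈ (S m).domain ↔
      (WithLp.equiv 2 (H × K) f).1 ∈ (A.ppow m).domain ∧
      (WithLp.equiv 2 (H × K) f).2 ∈ (B.ppow m).domain)
    (hSact : ∀ m, ∀ (f : (S m).domain)
      (ha : (WithLp.equiv 2 (H × K) (f : WithLp 2 (H × K))).1 ∈ (A.ppow m).domain)
      (hb : (WithLp.equiv 2 (H × K) (f : WithLp 2 (H × K))).2 ∈ (B.ppow m).domain),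
      WithLp.equiv 2 (H × K) ((S m) f) = ((A.ppow m) ⟨_, ha⟩, (B.ppow m) ⟨_, hb⟩))
    -- closability of the powers and `C`-selfadjointness of the closures
    (hclosable : ∀ m, 1 ≤ m → m ≤ k →
      (A.ppow m).IsClosable ∧ (B.ppow m).IsClosable ∧ (S m).IsClosable)
    (hsa : ∀ m, 1 ≤ m → m ≤ k → CSelfAdjoint C ((S m).closure))
    -- `F` is a linearly dense subspace of `H` contained in the union of the kernels
    (F : Submodule ℂ H) (hFdense : Dense (F : Set H))
    (hF : ∀ x ∈ F, ∃ m, 1 ≤ m ∧ m ≤ k ∧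
      x ∈ pker (A.ppow m).closure ∩ pker ((A.ppow (k + 1 - m)).adjoint))
    -- the corresponding union of kernels for `B` is trivial
    (hB : ∀ y : K, (∃ m, 1 ≤ m ∧ m ≤ k ∧
      y ∈ pker ((B.ppow m).adjoint) ∩ pker (B.ppow (k + 1 - m)).closure) → y = 0) :
    -- `H` and `K` reduce `C`, and `A`, `B` are complex selfadjoint
    (∀ x : H, (WithLp.equiv 2 (H × K)
      (C.toFun ((WithLp.equiv 2 (H × K)).symm (x, 0)))).2 = 0) ∧
    (∀ y : K, (WithLp.equiv 2 (H × K)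
      (C.toFun ((WithLp.equiv 2 (H × K)).symm (0, y)))).1 = 0) ∧
    (∃ CH : Conjugation H, CSelfAdjoint CH A) ∧
    (∃ CK : Conjugation K, CSelfAdjoint CK B) := by
  have heA := test_part1 k A B C S hSdom hclosable hsa
  have hCF := test_key k hk A B C S hSdom hSact hclosable hsa heA F hF hB
  have hcfst : Continuous (fun z : WithLp 2 (H × K) => (WithLp.equiv 2 (H × K) z).1) :=
    continuous_fst.comp (WithLp.prodContinuousLinearEquiv 2 ℂ H K).continuous
  have hcsnd : Continuous (fun z : WithLp 2 (H × K) => (WithLp.equiv 2 (H × K) z).2) :=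
    continuous_snd.comp (WithLp.prodContinuousLinearEquiv 2 ℂ H K).continuous
  have hcmk : Continuous (fun p : H × K => (WithLp.equiv 2 (H × K)).symm p) :=
    (WithLp.prodContinuousLinearEquiv 2 ℂ H K).symm.continuous
  -- clause 1
  have clause1 : ∀ x : H, (WithLp.equiv 2 (H × K)
      (C.toFun ((WithLp.equiv 2 (H × K)).symm (x, 0)))).2 = 0 := by
    have hfe : (fun x : H => (WithLp.equiv 2 (H × K)
        (C.toFun ((WithLp.equiv 2 (H × K)).symm (x, 0)))).2) = fun _ => (0 : K) :=
      Continuous.ext_on hFdense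
        (hcsnd.comp (C.continuous.comp (hcmk.comp (continuous_id.prodMk continuous_const))))
        continuous_const (fun x hx => hCF x hx)
    intro x
    exact congrFun hfe x
  -- clause 2
  have clause2 : ∀ y : K, (WithLp.equiv 2 (H × K)
      (C.toFun ((WithLp.equiv 2 (H × K)).symm (0, y)))).1 = 0 := by
    have hCfull : ∀ x' : H, C.toFun ((WithLp.equiv 2 (H × K)).symm
        ((WithLp.equiv 2 (H × K) (C.toFun ((WithLp.equiv 2 (H × K)).symm (x', 0)))).1, 0)) =
        (WithLp.equiv 2 (H × K)).symm (x', 0) := by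
      intro x'
      have h1 : C.toFun ((WithLp.equiv 2 (H × K)).symm (x', 0)) =
          (WithLp.equiv 2 (H × K)).symm
            ((WithLp.equiv 2 (H × K) (C.toFun ((WithLp.equiv 2 (H × K)).symm (x', 0)))).1, 0) := by
        apply (Equiv.eq_symm_apply _).mpr
        exact Prod.ext rfl (clause1 x')
      rw [← h1, C.invol]
    intro y
    set w := (WithLp.equiv 2 (H × K) (C.toFun ((WithLp.equiv 2 (H × K)).symm (0, y)))).1 with hw
    have hinner : (inner ℂ (C.toFun ((WithLp.equiv 2 (H × K)).symm (0, y)))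
        ((WithLp.equiv 2 (H × K)).symm (w, 0)) : ℂ) = 0 := by
      rw [← hCfull w, C.inner_map, WithLp.prod_inner_apply]
      simp [WithLp.equiv_symm_apply, WithLp.ofLp_toLp, WithLp.toLp_fst, WithLp.toLp_snd]
    rw [WithLp.prod_inner_apply] at hinner
    simp only [WithLp.equiv_symm_apply, WithLp.ofLp_toLp, WithLp.toLp_fst, WithLp.toLp_snd, inner_zero_right, add_zero] at hinner
    have hwfst : (C.toFun ((WithLp.equiv 2 (H × K)).symm (0, y))).fst = w := by
      rw [hw]; rfl
    change (inner ℂ w w : ℂ) = 0 at hinner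
    exact inner_self_eq_zero.mp hinner
  -- S 1 = T and C-selfadjointness of T
  obtain ⟨-, hA1⟩ := LinearPMap.ext_iff.mp (ppow_one_eq A)
  obtain ⟨-, hB1⟩ := LinearPMap.ext_iff.mp (ppow_one_eq B)
  have hS1T : S 1 = T := by
    apply LinearPMap.ext
    · ext f
      rw [hSdom 1 f, hTdom f, ppow_one_eq A, ppow_one_eq B]
    · intro z hz hy
      have ha := ((hSdom 1 z).1 hz).1
      have hb := ((hSdom 1 z).1 hz).2
      have ha' := ((hTdom z).1 hy).1
      have hb' := ((hTdom z).1 hy).2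
      apply (WithLp.equiv 2 (H × K)).injective
      rw [hSact 1 ⟨z, hz⟩ ha hb, hTact ⟨z, hy⟩ ha' hb']
      refine Prod.ext ?_ ?_
      · exact hA1 (hf := ha) (hg := ha')
      · exact hB1 (hf := hb) (hg := hb')
  have hTC : CSelfAdjoint C T := by
    have h' := hsa 1 le_rfl hk
    rwa [hS1T, closure_eq_self_of_isClosed hTclosed] at h'
  have hdT : Dense (T.domain : Set (WithLp 2 (H × K))) := hTC.dense_domain
  -- helpers for T on H-component
  have hmemTA : ∀ a : H, a ∈ A.domain → (WithLp.equiv 2 (H × K)).symm (a, 0) ∈ T.domain :=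
    fun a ha => (hTdom _).2 ⟨by simpa using ha, by simpa using Submodule.zero_mem B.domain⟩
  have hTvalA : ∀ (a : A.domain) (hm : (WithLp.equiv 2 (H × K)).symm ((a : H), 0) ∈ T.domain),
      T ⟨_, hm⟩ = (WithLp.equiv 2 (H × K)).symm (A a, 0) := by
    intro a hm
    have ha : (WithLp.equiv 2 (H × K) ((WithLp.equiv 2 (H × K)).symm ((a : H), (0 : K)))).1 ∈
        A.domain := by simpa using a.2
    have hb : (WithLp.equiv 2 (H × K) ((WithLp.equiv 2 (H × K)).symm ((a : H), (0 : K)))).2 ∈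
        B.domain := by simpa using Submodule.zero_mem B.domain
    have h2' : T ⟨_, hm⟩ = (WithLp.equiv 2 (H × K)).symm (A ⟨_, ha⟩, B ⟨_, hb⟩) :=
      (Equiv.eq_symm_apply _).mpr (hTact ⟨_, hm⟩ ha hb)
    rw [h2']
    apply congrArg (WithLp.equiv 2 (H × K)).symm
    refine Prod.ext ?_ ?_
    · show A ⟨_, ha⟩ = A a
      rw [show (⟨_, ha⟩ : A.domain) = a from Subtype.ext (by simp)]
    · show B ⟨_, hb⟩ = 0
      rw [show (⟨_, hb⟩ : B.domain) = 0 from Subtype.ext (by simp)]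
      exact B.map_zero
  have hmemTB : ∀ b : K, b ∈ B.domain → (WithLp.equiv 2 (H × K)).symm (0, b) ∈ T.domain :=
    fun b hb => (hTdom _).2 ⟨by simpa using Submodule.zero_mem A.domain, by simpa using hb⟩
  have hTvalB : ∀ (b : B.domain) (hm : (WithLp.equiv 2 (H × K)).symm (0, (b : K)) ∈ T.domain),
      T ⟨_, hm⟩ = (WithLp.equiv 2 (H × K)).symm (0, B b) := by
    intro b hm
    have ha : (WithLp.equiv 2 (H × K) ((WithLp.equiv 2 (H × K)).symm ((0 : H), (b : K)))).1 ∈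
        A.domain := by simpa using Submodule.zero_mem A.domain
    have hb : (WithLp.equiv 2 (H × K) ((WithLp.equiv 2 (H × K)).symm ((0 : H), (b : K)))).2 ∈
        B.domain := by simpa using b.2
    have h2' : T ⟨_, hm⟩ = (WithLp.equiv 2 (H × K)).symm (A ⟨_, ha⟩, B ⟨_, hb⟩) :=
      (Equiv.eq_symm_apply _).mpr (hTact ⟨_, hm⟩ ha hb)
    rw [h2']
    apply congrArg (WithLp.equiv 2 (H × K)).symm
    refine Prod.ext ?_ ?_
    · show A ⟨_, ha⟩ = 0
      rw [show (⟨_, ha⟩ : A.domain) = 0 from Subtype.ext (by simp)]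
      exact A.map_zero
    · show B ⟨_, hb⟩ = B b
      rw [show (⟨_, hb⟩ : B.domain) = b from Subtype.ext (by simp)]
  refine ⟨clause1, clause2, ?_, ?_⟩
  · -- construction of the conjugation on H
    set cH : H → H := fun x =>
      (WithLp.equiv 2 (H × K) (C.toFun ((WithLp.equiv 2 (H × K)).symm (x, 0)))).1 with hcH
    have hCfull : ∀ x : H, C.toFun ((WithLp.equiv 2 (H × K)).symm (x, 0)) =
        (WithLp.equiv 2 (H × K)).symm (cH x, 0) := by
      intro x
      apply (Equiv.eq_symm_apply _).mpr
      exact Prod.ext rfl (clause1 x)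
    have hadd : ∀ x y : H, cH (x + y) = cH x + cH y := by
      intro x y
      show (WithLp.equiv 2 (H × K) (C.toFun ((WithLp.equiv 2 (H × K)).symm (x + y, 0)))).1 = _
      have hxy : ((x + y : H), (0 : K)) = ((x, 0) : H × K) + (y, 0) := by
        rw [Prod.mk_add_mk, add_zero]
      rw [hxy, show (WithLp.equiv 2 (H × K)).symm (((x, 0) : H × K) + (y, 0)) =
        (WithLp.equiv 2 (H × K)).symm (x, 0) + (WithLp.equiv 2 (H × K)).symm (y, 0) from rfl,
        C.map_add']
      rfl
    have hsmul : ∀ (c : ℂ) (x : H), cH (c • x) = (starRingEnd ℂ c) • cH x := by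
      intro c x
      show (WithLp.equiv 2 (H × K) (C.toFun ((WithLp.equiv 2 (H × K)).symm (c • x, 0)))).1 = _
      have hxy : ((c • x : H), (0 : K)) = c • ((x, 0) : H × K) := by
        rw [Prod.smul_mk, smul_zero]
      rw [hxy, show (WithLp.equiv 2 (H × K)).symm (c • ((x, 0) : H × K)) =
        c • (WithLp.equiv 2 (H × K)).symm (x, 0) from rfl, C.map_smul']
      rfl
    have hinv : ∀ x : H, cH (cH x) = x := by
      intro x
      show (WithLp.equiv 2 (H × K) (C.toFun ((WithLp.equiv 2 (H × K)).symm (cH x, 0)))).1 = x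
      rw [← hCfull x, C.invol]
      simp
    have hip : ∀ x y : H, (inner ℂ (cH x) (cH y) : ℂ) = inner ℂ y x := by
      intro x y
      have h1 := C.inner_map ((WithLp.equiv 2 (H × K)).symm (x, 0))
        ((WithLp.equiv 2 (H × K)).symm (y, 0))
      rw [hCfull x, hCfull y, WithLp.prod_inner_apply, WithLp.prod_inner_apply] at h1
      simpa [WithLp.equiv_symm_apply, WithLp.ofLp_toLp, WithLp.toLp_fst, WithLp.toLp_snd] using h1
    refine ⟨⟨cH, hadd, hsmul, hinv, hip⟩, ?_, ?_⟩
    · -- CSymmetric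
      intro a
      have hmT := hmemTA _ a.2
      obtain ⟨hx', hcv⟩ := hTC.1 ⟨_, hmT⟩
      have hq : T.adjoint ⟨C.toFun ((WithLp.equiv 2 (H × K)).symm ((a : H), 0)), hx'⟩ =
          (WithLp.equiv 2 (H × K)).symm (cH (A a), 0) := by
        have h' := congrArg C.toFun hcv
        rw [C.invol, hTvalA a hmT, hCfull (A a)] at h'
        exact h'
      have hinner2 : ∀ b : A.domain, (inner ℂ (cH (A a)) (b : H) : ℂ) = inner ℂ (cH (a : H)) (A b) := by
        intro b
        have hmb := hmemTA _ b.2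
        have hfa := LinearPMap.adjoint_isFormalAdjoint hdT
          ⟨C.toFun ((WithLp.equiv 2 (H × K)).symm ((a : H), 0)), hx'⟩ ⟨_, hmb⟩
        rw [hq] at hfa
        have hfa2 : (inner ℂ ((WithLp.equiv 2 (H × K)).symm (cH (A a), (0 : K)))
            ((WithLp.equiv 2 (H × K)).symm ((b : H), (0 : K))) : ℂ) =
            inner ℂ (C.toFun ((WithLp.equiv 2 (H × K)).symm ((a : H), 0)))
              (T ⟨(WithLp.equiv 2 (H × K)).symm ((b : H), 0), hmb⟩) := hfa
        rw [hCfull (a : H)] at hfa2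
        rw [hTvalA b hmb] at hfa2
        rw [WithLp.prod_inner_apply, WithLp.prod_inner_apply] at hfa2
        simpa [WithLp.equiv_symm_apply, WithLp.ofLp_toLp, WithLp.toLp_fst, WithLp.toLp_snd] using hfa2
      have hmemA : cH (a : H) ∈ A.adjoint.domain :=
        LinearPMap.mem_adjoint_domain_of_exists _ ⟨cH (A a), fun b => hinner2 b⟩
      refine ⟨hmemA, ?_⟩
      have hAv : A.adjoint ⟨cH (a : H), hmemA⟩ = cH (A a) :=
        LinearPMap.adjoint_apply_eq hdA _ (fun b => hinner2 b)
      show cH (A.adjoint ⟨cH (a : H), hmemA⟩) = A a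
      rw [hAv, hinv]
    · -- second clause
      intro y hy
      have hy' : cH y ∈ A.adjoint.domain := hy
      have hmemT' : C.toFun ((WithLp.equiv 2 (H × K)).symm (y, 0)) ∈ T.adjoint.domain := by
        rw [hCfull y]
        apply LinearPMap.mem_adjoint_domain_of_exists
        refine ⟨(WithLp.equiv 2 (H × K)).symm (A.adjoint ⟨cH y, hy'⟩, 0), fun w => ?_⟩
        have ha := ((hTdom ↑w).1 w.2).1
        have hb := ((hTdom ↑w).1 w.2).2
        have hTw : T w = (WithLp.equiv 2 (H × K)).symm (A ⟨_, ha⟩, B ⟨_, hb⟩) :=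
          (Equiv.eq_symm_apply _).mpr (hTact w ha hb)
        have hfa := LinearPMap.adjoint_isFormalAdjoint hdA ⟨cH y, hy'⟩ ⟨_, ha⟩
        rw [hTw]
        have hl : (inner ℂ ((WithLp.equiv 2 (H × K)).symm (A.adjoint ⟨cH y, hy'⟩, (0 : K)))
            (w : WithLp 2 (H × K)) : ℂ) =
            inner ℂ (A.adjoint ⟨cH y, hy'⟩) ((w : WithLp 2 (H × K)).fst) := by
          rw [WithLp.prod_inner_apply]
          simp [WithLp.equiv_symm_apply, WithLp.ofLp_toLp, WithLp.toLp_fst, WithLp.toLp_snd]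
        have hr : (inner ℂ ((WithLp.equiv 2 (H × K)).symm (cH y, (0 : K)))
            ((WithLp.equiv 2 (H × K)).symm (A ⟨_, ha⟩, B ⟨_, hb⟩)) : ℂ) =
            inner ℂ (cH y) (A ⟨_, ha⟩) := by
          rw [WithLp.prod_inner_apply]
          simp [WithLp.equiv_symm_apply, WithLp.ofLp_toLp, WithLp.toLp_fst, WithLp.toLp_snd]
        rw [hl, hr]
        exact hfa
      have hmem := (hTdom _).1 (hTC.2 _ hmemT')
      simpa using hmem.1
  · -- construction of the conjugation on K
    set cK : K → K := fun y =>
      (WithLp.equiv 2 (H × K) (C.toFun ((WithLp.equiv 2 (H × K)).symm (0, y)))).2 with hcK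
    have hCfull : ∀ y : K, C.toFun ((WithLp.equiv 2 (H × K)).symm (0, y)) =
        (WithLp.equiv 2 (H × K)).symm (0, cK y) := by
      intro y
      apply (Equiv.eq_symm_apply _).mpr
      exact Prod.ext (clause2 y) rfl
    have hadd : ∀ x y : K, cK (x + y) = cK x + cK y := by
      intro x y
      show (WithLp.equiv 2 (H × K) (C.toFun ((WithLp.equiv 2 (H × K)).symm (0, x + y)))).2 = _
      have hxy : ((0 : H), (x + y : K)) = ((0, x) : H × K) + (0, y) := by
        rw [Prod.mk_add_mk, add_zero]
      rw [hxy, show (WithLp.equiv 2 (H × K)).symm (((0, x) : H × K) + (0, y)) =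
        (WithLp.equiv 2 (H × K)).symm (0, x) + (WithLp.equiv 2 (H × K)).symm (0, y) from rfl,
        C.map_add']
      rfl
    have hsmul : ∀ (c : ℂ) (y : K), cK (c • y) = (starRingEnd ℂ c) • cK y := by
      intro c y
      show (WithLp.equiv 2 (H × K) (C.toFun ((WithLp.equiv 2 (H × K)).symm (0, c • y)))).2 = _
      have hxy : ((0 : H), (c • y : K)) = c • ((0, y) : H × K) := by
        rw [Prod.smul_mk, smul_zero]
      rw [hxy, show (WithLp.equiv 2 (H × K)).symm (c • ((0, y) : H × K)) =
        c • (WithLp.equiv 2 (H × K)).symm (0, y) from rfl, C.map_smul']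
      rfl
    have hinv : ∀ y : K, cK (cK y) = y := by
      intro y
      show (WithLp.equiv 2 (H × K) (C.toFun ((WithLp.equiv 2 (H × K)).symm (0, cK y)))).2 = y
      rw [← hCfull y, C.invol]
      simp
    have hip : ∀ x y : K, (inner ℂ (cK x) (cK y) : ℂ) = inner ℂ y x := by
      intro x y
      have h1 := C.inner_map ((WithLp.equiv 2 (H × K)).symm (0, x))
        ((WithLp.equiv 2 (H × K)).symm (0, y))
      rw [hCfull x, hCfull y, WithLp.prod_inner_apply, WithLp.prod_inner_apply] at h1
      simpa [WithLp.equiv_symm_apply, WithLp.ofLp_toLp, WithLp.toLp_fst, WithLp.toLp_snd] using h1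
    refine ⟨⟨cK, hadd, hsmul, hinv, hip⟩, ?_, ?_⟩
    · -- CSymmetric
      intro a
      have hmT := hmemTB _ a.2
      obtain ⟨hx', hcv⟩ := hTC.1 ⟨_, hmT⟩
      have hq : T.adjoint ⟨C.toFun ((WithLp.equiv 2 (H × K)).symm (0, (a : K))), hx'⟩ =
          (WithLp.equiv 2 (H × K)).symm (0, cK (B a)) := by
        have h' := congrArg C.toFun hcv
        rw [C.invol, hTvalB a hmT, hCfull (B a)] at h'
        exact h'
      have hinner2 : ∀ b : B.domain, (inner ℂ (cK (B a)) (b : K) : ℂ) = inner ℂ (cK (a : K)) (B b) := by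
        intro b
        have hmb := hmemTB _ b.2
        have hfa := LinearPMap.adjoint_isFormalAdjoint hdT
          ⟨C.toFun ((WithLp.equiv 2 (H × K)).symm (0, (a : K))), hx'⟩ ⟨_, hmb⟩
        rw [hq] at hfa
        have hfa2 : (inner ℂ ((WithLp.equiv 2 (H × K)).symm ((0 : H), cK (B a)))
            ((WithLp.equiv 2 (H × K)).symm ((0 : H), (b : K))) : ℂ) =
            inner ℂ (C.toFun ((WithLp.equiv 2 (H × K)).symm (0, (a : K))))
              (T ⟨(WithLp.equiv 2 (H × K)).symm (0, (b : K)), hmb⟩) := hfa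
        rw [hCfull (a : K)] at hfa2
        rw [hTvalB b hmb] at hfa2
        rw [WithLp.prod_inner_apply, WithLp.prod_inner_apply] at hfa2
        simpa [WithLp.equiv_symm_apply, WithLp.ofLp_toLp, WithLp.toLp_fst, WithLp.toLp_snd] using hfa2
      have hmemB : cK (a : K) ∈ B.adjoint.domain :=
        LinearPMap.mem_adjoint_domain_of_exists _ ⟨cK (B a), fun b => hinner2 b⟩
      refine ⟨hmemB, ?_⟩
      have hBv : B.adjoint ⟨cK (a : K), hmemB⟩ = cK (B a) :=
        LinearPMap.adjoint_apply_eq hdB _ (fun b => hinner2 b)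
      show cK (B.adjoint ⟨cK (a : K), hmemB⟩) = B a
      rw [hBv, hinv]
    · -- second clause
      intro y hy
      have hy' : cK y ∈ B.adjoint.domain := hy
      have hmemT' : C.toFun ((WithLp.equiv 2 (H × K)).symm (0, y)) ∈ T.adjoint.domain := by
        rw [hCfull y]
        apply LinearPMap.mem_adjoint_domain_of_exists
        refine ⟨(WithLp.equiv 2 (H × K)).symm (0, B.adjoint ⟨cK y, hy'⟩), fun w => ?_⟩
        have ha := ((hTdom ↑w).1 w.2).1
        have hb := ((hTdom ↑w).1 w.2).2
        have hTw : T w = (WithLp.equiv 2 (H × K)).symm (A ⟨_, ha⟩, B ⟨_, hb⟩) :=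
          (Equiv.eq_symm_apply _).mpr (hTact w ha hb)
        have hfa := LinearPMap.adjoint_isFormalAdjoint hdB ⟨cK y, hy'⟩ ⟨_, hb⟩
        rw [hTw]
        have hl : (inner ℂ ((WithLp.equiv 2 (H × K)).symm ((0 : H), B.adjoint ⟨cK y, hy'⟩))
            (w : WithLp 2 (H × K)) : ℂ) =
            inner ℂ (B.adjoint ⟨cK y, hy'⟩) ((w : WithLp 2 (H × K)).snd) := by
          rw [WithLp.prod_inner_apply]
          simp [WithLp.equiv_symm_apply, WithLp.ofLp_toLp, WithLp.toLp_fst, WithLp.toLp_snd]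
        have hr : (inner ℂ ((WithLp.equiv 2 (H × K)).symm ((0 : H), cK y))
            ((WithLp.equiv 2 (H × K)).symm (A ⟨_, ha⟩, B ⟨_, hb⟩)) : ℂ) =
            inner ℂ (cK y) (B ⟨_, hb⟩) := by
          rw [WithLp.prod_inner_apply]
          simp [WithLp.equiv_symm_apply, WithLp.ofLp_toLp, WithLp.toLp_fst, WithLp.toLp_snd]
        rw [hl, hr]
        exact hfa
      have hmem := (hTdom _).1 (hTC.2 _ hmemT')
      simpa using hmem.2
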